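/- Let n ≥ 1 be a natural number, T ∈ (0, ∞], and let r : [0, T) → ℝ be differentiable with r′(t) = n·r(t)·(1 − r(t)⁴)/(1 + r(t)⁴) for all t ∈ [0, T). If r(0) > 1, then r(t) > 1 for all t ∈ [0, T) and r is strictly monotonically decreasing on [0, T). If 0 < r(0) < 1, then 0 < r(t) < 1 for all t ∈ [0, T) and r is strictly monotonically increasing on [0, T). If r(0) = 1, then r(t) = 1 for all t ∈ [0, T). In particular, r = 1 is a stable equilibrium (the standard sphere is an attractor). -/

import Mathlib

open scoped ENNReal

open Set

private lemma vf_hasDerivAt (n : ℕ) (x : ℝ) :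
    HasDerivAt (fun x : ℝ => (n : ℝ) * x * ((1 - x ^ 4) / (1 + x ^ 4)))
      ((n : ℝ) * (1 - 8 * x ^ 4 - x ^ 8) / (1 + x ^ 4) ^ 2) x := by
  have hden : (1 : ℝ) + x ^ 4 ≠ 0 := by positivity
  have h1 : HasDerivAt (fun x : ℝ => 1 - x ^ 4) (-(4 * x ^ 3)) x := by
    simpa using (hasDerivAt_pow 4 x).const_sub 1
  have h2 : HasDerivAt (fun x : ℝ => 1 + x ^ 4) (4 * x ^ 3) x := by
    simpa using (hasDerivAt_pow 4 x).const_add 1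
  have hg := h1.div h2 hden
  have hnx : HasDerivAt (fun x : ℝ => (n : ℝ) * x) (n : ℝ) x := by
    simpa using (hasDerivAt_id x).const_mul (n : ℝ)
  have h := hnx.mul hg
  refine HasDerivAt.congr_deriv h ?_
  simp only [Pi.div_apply]
  field_simp
  ring

private lemma vf_lipschitz (n : ℕ) :
    LipschitzWith (3 * n) (fun x : ℝ => (n : ℝ) * x * ((1 - x ^ 4) / (1 + x ^ 4))) := by
  apply lipschitzWith_of_nnnorm_deriv_le (fun x => (vf_hasDerivAt n x).differentiableAt)
  intro x
  rw [(vf_hasDerivAt n x).deriv, ← NNReal.coe_le_coe, coe_nnnorm, Real.norm_eq_abs]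
  push_cast
  have hpos : (0:ℝ) < (1 + x ^ 4) ^ 2 := by positivity
  rw [abs_div, abs_of_pos hpos, div_le_iff₀ hpos, abs_mul, Nat.abs_cast]
  have hn0 : (0:ℝ) ≤ n := n.cast_nonneg
  have hA : |1 - 8 * x ^ 4 - x ^ 8| ≤ 3 * (1 + x ^ 4) ^ 2 := by
    have h8 : x ^ 8 = (x ^ 4) ^ 2 := by ring
    have h1 := sq_nonneg (x ^ 4 - 1)
    have h2 := sq_nonneg (x ^ 4)
    have h0 : (0:ℝ) ≤ x ^ 4 := by positivity
    rw [abs_le]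
    constructor <;> nlinarith
  calc (n:ℝ) * |1 - 8 * x ^ 4 - x ^ 8| ≤ (n:ℝ) * (3 * (1 + x ^ 4) ^ 2) := by
        exact mul_le_mul_of_nonneg_left hA hn0
    _ = 3 * (n:ℝ) * (1 + x ^ 4) ^ 2 := by ring

/-- The ODE `r′ = n r (1 - r⁴)/(1 + r⁴)` (from the extended harmonic map heat flow
with the conformal metric built from the sphere inversion): solutions on `[0,T)`
with `r(0) > 1` stay `> 1` and strictly decrease, solutions with `0 < r(0) < 1`
stay in `(0,1)` and strictly increase, and `r ≡ 1` if `r(0) = 1`; the unit sphere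
is an attractor. -/
theorem extended_flow_ode_sphere_attractor
    (n : ℕ) (hn : 1 ≤ n) (T : ℝ≥0∞) (hT : 0 < T) (r : ℝ → ℝ)
    (S : Set ℝ) (hS : S = {t : ℝ | 0 ≤ t ∧ ENNReal.ofReal t < T})
    (hr : ∀ t ∈ S, HasDerivWithinAt r
      ((n : ℝ) * r t * ((1 - r t ^ 4) / (1 + r t ^ 4))) S t) :
    (1 < r 0 → (∀ t ∈ S, 1 < r t) ∧ StrictAntiOn r S) ∧
    (0 < r 0 → r 0 < 1 → (∀ t ∈ S, 0 < r t ∧ r t < 1) ∧ StrictMonoOn r S) ∧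
    (r 0 = 1 → ∀ t ∈ S, r t = 1) := by
  set v : ℝ → ℝ := fun x => (n : ℝ) * x * ((1 - x ^ 4) / (1 + x ^ 4)) with hv
  have hn' : (0:ℝ) < n := by exact_mod_cast Nat.lt_of_lt_of_le Nat.zero_lt_one hn
  have h0S : (0:ℝ) ∈ S := by rw [hS]; exact ⟨le_rfl, by simpa using hT⟩
  have hVopen : IsOpen {t : ℝ | ENNReal.ofReal t < T} :=
    isOpen_lt ENNReal.continuous_ofReal continuous_const
  have hsub : ∀ t ∈ S, Icc 0 t ⊆ S := by
    intro t ht s hs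
    rw [hS] at ht ⊢
    exact ⟨hs.1, lt_of_le_of_lt (ENNReal.ofReal_le_ofReal hs.2) ht.2⟩
  have hconv : Convex ℝ S := by
    rw [convex_iff_ordConnected]
    refine ⟨fun a ha b hb c hc => ?_⟩
    rw [hS] at ha hb ⊢
    exact ⟨ha.1.trans hc.1, lt_of_le_of_lt (ENNReal.ofReal_le_ofReal hc.2) hb.2⟩
  have hnr : ∀ t ∈ S, S ∈ nhdsWithin t (Ici t) := by
    intro t ht
    rw [hS] at ht
    refine Filter.mem_of_superset (Filter.inter_mem self_mem_nhdsWithin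
      (nhdsWithin_le_nhds (hVopen.mem_nhds ht.2))) ?_
    rintro s ⟨hs1, hs2⟩
    rw [hS]; exact ⟨ht.1.trans hs1, hs2⟩
  have hnh : ∀ t ∈ S, 0 < t → S ∈ nhds t := by
    intro t ht ht0
    rw [hS] at ht
    refine Filter.mem_of_superset (Filter.inter_mem (isOpen_Ioi.mem_nhds ht0)
      (hVopen.mem_nhds ht.2)) ?_
    rintro s ⟨hs1, hs2⟩
    rw [hS]; exact ⟨le_of_lt hs1, hs2⟩
  have hIci : ∀ t ∈ S, HasDerivWithinAt r (v (r t)) (Ici t) t :=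
    fun t ht => (hr t ht).mono_of_mem_nhdsWithin (hnr t ht)
  have hAt : ∀ t ∈ S, 0 < t → HasDerivAt r (v (r t)) t :=
    fun t ht ht0 => (hr t ht).hasDerivAt (hnh t ht ht0)
  have hcont : ContinuousOn r S := fun t ht => (hr t ht).continuousWithinAt
  have hv1 : v 1 = 0 := by norm_num [hv]
  have hv0 : v 0 = 0 := by norm_num [hv]
  have hfwd : ∀ c : ℝ, v c = 0 → r 0 = c → ∀ t ∈ S, r t = c := by
    intro c hc h0 t ht
    have h0t : (0:ℝ) ≤ t := by rw [hS] at ht; exact ht.1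
    have key := ODE_solution_unique (v := fun _ x => v x) (K := 3 * n)
      (fun _ => vf_lipschitz n)
      (hcont.mono (hsub t ht))
      (fun s hs => hIci s (hsub t ht ⟨hs.1, hs.2.le⟩))
      (continuousOn_const (c := c))
      (fun s hs => by simpa [hc] using hasDerivWithinAt_const s (Ici s) c)
      h0
    exact key ⟨h0t, le_rfl⟩
  have hbwd : ∀ c : ℝ, v c = 0 → ∀ t ∈ S, r t = c → r 0 = c := by
    intro c hc t ht hrt
    have h0t : (0:ℝ) ≤ t := by rw [hS] at ht; exact ht.1
    have key := ODE_solution_unique_of_mem_Icc_left (v := fun _ x => v x) (K := 3 * n)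
      (s := fun _ => Set.univ)
      (fun _ _ => (vf_lipschitz n).lipschitzOnWith)
      (hcont.mono (hsub t ht))
      (fun s hs => (hAt s (hsub t ht ⟨hs.1.le, hs.2⟩) hs.1).hasDerivWithinAt)
      (fun _ _ => trivial)
      (continuousOn_const (c := c))
      (fun s hs => by simpa [hc] using hasDerivWithinAt_const s (Iic s) c)
      (fun _ _ => trivial)
      hrt
    exact key ⟨le_rfl, h0t⟩
  have hvneg : ∀ a : ℝ, 1 < a → v a < 0 := by
    intro a ha
    have h4 : 1 < a ^ 4 := one_lt_pow₀ ha (by norm_num)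
    have hq : (1 - a ^ 4) / (1 + a ^ 4) < 0 :=
      div_neg_of_neg_of_pos (by linarith) (by positivity)
    have hna : 0 < (n:ℝ) * a := by positivity
    simpa [hv] using mul_neg_of_pos_of_neg hna hq
  have hvpos : ∀ a : ℝ, 0 < a → a < 1 → 0 < v a := by
    intro a ha0 ha1
    have h4 : a ^ 4 < 1 := pow_lt_one₀ ha0.le ha1 (by norm_num)
    have hq : 0 < (1 - a ^ 4) / (1 + a ^ 4) :=
      div_pos (by linarith) (by positivity)
    have hna : 0 < (n:ℝ) * a := by positivity
    simpa [hv] using mul_pos hna hq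
  refine ⟨?_, ?_, fun h0 => hfwd 1 hv1 h0⟩
  · intro h1
    have hgt : ∀ t ∈ S, 1 < r t := by
      intro t ht
      by_contra hle
      push_neg at hle
      have h0t : (0:ℝ) ≤ t := by rw [hS] at ht; exact ht.1
      obtain ⟨s, hs, hrs⟩ : ∃ s ∈ Icc (0:ℝ) t, r s = 1 := by
        rcases eq_or_lt_of_le hle with heq | hlt
        · exact ⟨t, ⟨h0t, le_rfl⟩, heq⟩
        · obtain ⟨s, hs, hrs⟩ := intermediate_value_Icc' h0t (hcont.mono (hsub t ht))
            ⟨hle, h1.le⟩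
          exact ⟨s, hs, hrs⟩
      have := hbwd 1 hv1 s (hsub t ht hs) hrs
      linarith
    refine ⟨hgt, strictAntiOn_of_deriv_neg hconv hcont ?_⟩
    intro x hx
    have hxS : x ∈ S := interior_subset hx
    have hd : HasDerivAt r (v (r x)) x := (hr x hxS).hasDerivAt (mem_interior_iff_mem_nhds.mp hx)
    rw [hd.deriv]
    exact hvneg _ (hgt x hxS)
  · intro h0 h1
    have hin : ∀ t ∈ S, 0 < r t ∧ r t < 1 := by
      intro t ht
      have h0t : (0:ℝ) ≤ t := by rw [hS] at ht; exact ht.1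
      constructor
      · by_contra hle
        push_neg at hle
        obtain ⟨s, hs, hrs⟩ := intermediate_value_Icc' h0t (hcont.mono (hsub t ht))
          ⟨hle, h0.le⟩
        have := hbwd 0 hv0 s (hsub t ht hs) hrs
        linarith
      · by_contra hge
        push_neg at hge
        obtain ⟨s, hs, hrs⟩ : ∃ s ∈ Icc (0:ℝ) t, r s = 1 := by
          rcases eq_or_lt_of_le hge with heq | hlt
          · exact ⟨t, ⟨h0t, le_rfl⟩, heq.symm⟩
          · obtain ⟨s, hs, hrs⟩ := intermediate_value_Icc h0t (hcont.mono (hsub t ht))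
              ⟨h1.le, hge⟩
            exact ⟨s, hs, hrs⟩
        have := hbwd 1 hv1 s (hsub t ht hs) hrs
        linarith
    refine ⟨hin, strictMonoOn_of_deriv_pos hconv hcont ?_⟩
    intro x hx
    have hxS : x ∈ S := interior_subset hx
    have hd : HasDerivAt r (v (r x)) x := (hr x hxS).hasDerivAt (mem_interior_iff_mem_nhds.mp hx)
    rw [hd.deriv]
    exact hvpos _ (hin x hxS).1 (hin x hxS).2
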